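/- Let ρ be a d×d density matrix whose minimal nonzero eigenvalue is κ with 0 < κ < 1, and let 0 < ε < 1. Define S_N(ρ) := Σ_{j=1}^N (1/j) · tr(ρ (I − ρ)^j) and S(ρ) := −Σ_{i : λ_i ≠ 0} λ_i ln λ_i where λ_i are the eigenvalues of ρ with multiplicity. If N is a natural number with N ≥ ln(2/(ε κ)) / ln(1/(1 − κ)), then |S_N(ρ) − S(ρ)| ≤ ε/2. -/

import Mathlib

open Matrix
open scoped ComplexOrder


lemma log_tail_bound {lam : ℝ} (h0 : 0 < lam) (h1 : lam ≤ 1) (N : ℕ) :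
    0 ≤ (-Real.log lam) - ∑ j ∈ Finset.Icc 1 N, (1 - lam) ^ j / j ∧
    (-Real.log lam) - ∑ j ∈ Finset.Icc 1 N, (1 - lam) ^ j / j ≤ (1 - lam) ^ (N + 1) / lam := by
  set x : ℝ := 1 - lam with hx
  have hx0 : 0 ≤ x := by rw [hx]; linarith
  have hx1 : x < 1 := by rw [hx]; linarith
  have hax : |x| < 1 := by rw [abs_of_nonneg hx0]; exact hx1
  have hs : HasSum (fun n : ℕ => x ^ (n + 1) / (n + 1)) (-Real.log lam) := by
    have := Real.hasSum_pow_div_log_of_abs_lt_one hax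
    simpa [hx] using this
  have hsum : Summable (fun n : ℕ => x ^ (n + 1) / (n + 1)) := hs.summable
  have hpart : ∑ j ∈ Finset.Icc 1 N, (1 - lam) ^ j / (j : ℝ)
      = ∑ n ∈ Finset.range N, x ^ (n + 1) / (n + 1) := by
    rw [← Finset.Ico_add_one_right_eq_Icc, Finset.sum_Ico_eq_sum_range]
    simp [hx, add_comm]
  have htail : (-Real.log lam) - ∑ n ∈ Finset.range N, x ^ (n + 1) / (n + 1)
      = ∑' n : ℕ, x ^ (n + N + 1) / (n + N + 1) := by
    have h2 := Summable.sum_add_tsum_nat_add (f := fun n : ℕ => x ^ (n + 1) / (n + 1)) N hsum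
    rw [hs.tsum_eq] at h2
    push_cast at h2 ⊢
    linarith [h2]
  rw [hpart, htail]
  have hterm_nonneg : ∀ n : ℕ, 0 ≤ x ^ (n + N + 1) / ((n : ℝ) + N + 1) := fun n =>
    div_nonneg (pow_nonneg hx0 _) (by positivity)
  constructor
  · exact tsum_nonneg hterm_nonneg
  · have hgs : Summable (fun n : ℕ => x ^ (N + 1) * x ^ n) :=
      (summable_geometric_of_lt_one hx0 hx1).mul_left _
    have hle : ∀ n : ℕ, x ^ (n + N + 1) / ((n : ℝ) + N + 1) ≤ x ^ (N + 1) * x ^ n := by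
      intro n
      have h1' : (1 : ℝ) ≤ (n : ℝ) + N + 1 := by
        have hn := Nat.cast_nonneg (α := ℝ) n
        have hN := Nat.cast_nonneg (α := ℝ) N
        linarith
      calc x ^ (n + N + 1) / ((n : ℝ) + N + 1) ≤ x ^ (n + N + 1) :=
            div_le_self (pow_nonneg hx0 _) h1'
          _ = x ^ (N + 1) * x ^ n := by rw [← pow_add]; ring_nf
    have hsum2 : Summable (fun n : ℕ => x ^ (n + N + 1) / ((n : ℝ) + N + 1)) :=
      hgs.of_nonneg_of_le hterm_nonneg hle
    calc (∑' n : ℕ, x ^ (n + N + 1) / ((n : ℝ) + N + 1)) ≤ ∑' n : ℕ, x ^ (N + 1) * x ^ n :=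
          Summable.tsum_le_tsum hle hsum2 hgs
      _ = x ^ (N + 1) * (1 - x)⁻¹ := by rw [tsum_mul_left, tsum_geometric_of_lt_one hx0 hx1]
      _ = (1 - lam) ^ (N + 1) / lam := by rw [hx]; ring_nf

open Matrix

lemma trace_mul_pow_eq (d : ℕ) (ρ : Matrix (Fin d) (Fin d) ℂ) (hH : ρ.IsHermitian) (j : ℕ) :
    (ρ * (1 - ρ) ^ j).trace
      = ((∑ i, hH.eigenvalues i * (1 - hH.eigenvalues i) ^ j : ℝ) : ℂ) := by
  set u : Matrix (Fin d) (Fin d) ℂ := (hH.eigenvectorUnitary : Matrix (Fin d) (Fin d) ℂ) with hu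
  have hu1 : u * star u = 1 := (Matrix.mem_unitaryGroup_iff).mp (hH.eigenvectorUnitary).2
  have hu2 : star u * u = 1 := (Matrix.mem_unitaryGroup_iff').mp (hH.eigenvectorUnitary).2
  set D : Matrix (Fin d) (Fin d) ℂ := Matrix.diagonal (RCLike.ofReal ∘ hH.eigenvalues) with hD
  have hspec : ρ = u * D * star u := hH.spectral_theorem
  have key : ∀ A B : Matrix (Fin d) (Fin d) ℂ,
      (u * A * star u) * (u * B * star u) = u * (A * B) * star u := by
    intro A B
    simp only [Matrix.mul_assoc]
    rw [show star u * (u * (B * star u)) = B * star u by rw [← Matrix.mul_assoc, hu2, one_mul]]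
  have hsub : 1 - ρ = u * (1 - D) * star u := by
    rw [hspec, Matrix.mul_sub, Matrix.sub_mul, mul_one, hu1]
  have hpow : (1 - ρ) ^ j = u * (1 - D) ^ j * star u := by
    rw [hsub]
    induction j with
    | zero => rw [pow_zero, pow_zero, mul_one, hu1]
    | succ k ih => rw [pow_succ, pow_succ, ih, key]
  have hmain : ρ * (1 - ρ) ^ j = u * (D * (1 - D) ^ j) * star u := by
    conv_lhs => rw [hpow]
    conv_lhs => rw [hspec]
    rw [key]
  rw [hmain, Matrix.trace_mul_cycle, ← Matrix.mul_assoc, hu2, one_mul]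
  have h1D : (1 : Matrix (Fin d) (Fin d) ℂ) - D
      = Matrix.diagonal (fun i => 1 - ((hH.eigenvalues i : ℝ) : ℂ)) := by
    rw [hD, ← Matrix.diagonal_one, Matrix.diagonal_sub]
    rfl
  rw [h1D, hD, Matrix.diagonal_pow, Matrix.diagonal_mul_diagonal, Matrix.trace_diagonal]
  push_cast
  rfl


/-- The truncated Taylor series `S_N(ρ) = Σ_{j=1}^N (1/j) · tr(ρ (I − ρ)^j)`. -/
noncomputable def truncEntropy (d : ℕ) (ρ : Matrix (Fin d) (Fin d) ℂ) (N : ℕ) : ℂ :=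
  ∑ j ∈ Finset.Icc 1 N, (1 / (j : ℂ)) * (ρ * (1 - ρ) ^ j).trace

/-- The von Neumann entropy `S(ρ) = −Σ_{i : λ_i ≠ 0} λ_i ln λ_i`, where the `λ_i`
are the (real) eigenvalues of the Hermitian matrix `ρ`, with multiplicity. -/
noncomputable def vonNeumannEntropy (d : ℕ) {ρ : Matrix (Fin d) (Fin d) ℂ}
    (hρ : ρ.IsHermitian) : ℝ :=
  -∑ i ∈ Finset.univ.filter (fun i => hρ.eigenvalues i ≠ 0),
      hρ.eigenvalues i * Real.log (hρ.eigenvalues i)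

/-- If `κ` is the minimal nonzero eigenvalue of the density matrix `ρ` (with `0 < κ < 1`),
`0 < ε < 1`, and `N ≥ ln(2/(εκ)) / ln(1/(1−κ))`, then `|S_N(ρ) − S(ρ)| ≤ ε/2`. -/
theorem stmt5 (d : ℕ) (ρ : Matrix (Fin d) (Fin d) ℂ)
    (hρ : ρ.PosSemidef) (hρtr : ρ.trace = 1)
    (κ : ℝ) (hκ0 : 0 < κ) (hκ1 : κ < 1)
    (hκmem : ∃ i, hρ.isHermitian.eigenvalues i = κ)
    (hκmin : ∀ i, hρ.isHermitian.eigenvalues i ≠ 0 → κ ≤ hρ.isHermitian.eigenvalues i)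
    (ε : ℝ) (hε0 : 0 < ε) (hε1 : ε < 1)
    (N : ℕ) (hN : Real.log (2 / (ε * κ)) / Real.log (1 / (1 - κ)) ≤ (N : ℝ)) :
    ‖truncEntropy d ρ N - ((vonNeumannEntropy d hρ.isHermitian : ℝ) : ℂ)‖
      ≤ ε / 2 := by
  set hH := hρ.isHermitian with hHdef
  set lam : Fin d → ℝ := hH.eigenvalues with hlam
  -- basic eigenvalue facts
  have hnn : ∀ i, 0 ≤ lam i := fun i => hρ.eigenvalues_nonneg i
  have hsum1 : ∑ i, lam i = 1 := by
    have h0 := trace_mul_pow_eq d ρ hH 0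
    simp only [pow_zero, mul_one, hρtr] at h0
    exact_mod_cast h0.symm
  have hle1 : ∀ i, lam i ≤ 1 := by
    intro i
    rw [← hsum1]
    exact Finset.single_le_sum (fun j _ => hnn j) (Finset.mem_univ i)
  -- truncEntropy as a real sum
  set T : Fin d → ℝ := fun i => ∑ j ∈ Finset.Icc 1 N, (1 - lam i) ^ j / j with hT
  have htrunc : truncEntropy d ρ N = ((∑ i, lam i * T i : ℝ) : ℂ) := by
    unfold truncEntropy
    have step : ∀ j ∈ Finset.Icc 1 N, (1 / (j : ℂ)) * (ρ * (1 - ρ) ^ j).trace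
        = ((1 / (j : ℝ)) * ∑ i, lam i * (1 - lam i) ^ j : ℝ) := by
      intro j _
      rw [trace_mul_pow_eq d ρ hH j]
      push_cast
      ring
    rw [Finset.sum_congr rfl step, ← Complex.ofReal_sum]
    congr 1
    simp only [Finset.mul_sum]
    rw [Finset.sum_comm]
    apply Finset.sum_congr rfl
    intro i _
    simp only [hT, Finset.mul_sum]
    exact Finset.sum_congr rfl fun j _ => by ring
  -- entropy as full sum
  have hent : vonNeumannEntropy d hH = -∑ i, lam i * Real.log (lam i) := by
    unfold vonNeumannEntropy
    congr 1
    apply Finset.sum_filter_of_ne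
    intro i _ h
    intro h0
    rw [h0] at h
    simp at h
  -- per-eigenvalue error
  set C : ℝ := (1 - κ) ^ (N + 1) / κ with hC
  set e : Fin d → ℝ := fun i => -(lam i * Real.log (lam i)) - lam i * T i with he
  have he_nonneg : ∀ i, 0 ≤ e i := by
    intro i
    rcases eq_or_lt_of_le (hnn i) with h0 | h0
    · simp [he, ← h0]
    · have hb := (log_tail_bound h0 (hle1 i) N).1
      have : 0 ≤ lam i * ((-Real.log (lam i)) - T i) :=
        mul_nonneg (hnn i) hb
      simp only [he]
      nlinarith [this]
  have he_le : ∀ i, e i ≤ lam i * C := by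
    intro i
    rcases eq_or_lt_of_le (hnn i) with h0 | h0
    · simp [he, ← h0]
    · have hκle : κ ≤ lam i := hκmin i h0.ne'
      have hb := (log_tail_bound h0 (hle1 i) N).2
      have h2 : (1 - lam i) ^ (N + 1) / lam i ≤ C := by
        rw [hC]
        have hnum : (1 - lam i) ^ (N + 1) ≤ (1 - κ) ^ (N + 1) :=
          pow_le_pow_left₀ (by linarith [hle1 i]) (by linarith) _
        exact div_le_div₀ (pow_nonneg (by linarith : (0:ℝ) ≤ 1 - κ) _) hnum hκ0 hκle
      have h3 : lam i * ((-Real.log (lam i)) - T i) ≤ lam i * C :=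
        mul_le_mul_of_nonneg_left (le_trans hb h2) (hnn i)
      simp only [he]
      nlinarith [h3]
  -- sum of errors
  have hsumC : ∑ i, e i ≤ C := by
    calc ∑ i, e i ≤ ∑ i, lam i * C := Finset.sum_le_sum (fun i _ => he_le i)
      _ = (∑ i, lam i) * C := by rw [← Finset.sum_mul]
      _ = C := by rw [hsum1, one_mul]
  have hC0 : 0 ≤ C := by
    rw [hC]
    exact div_nonneg (pow_nonneg (by linarith) _) hκ0.le
  -- the key numeric bound : (1-κ)^N ≤ ε κ / 2
  have hpowN : (1 - κ) ^ N ≤ ε * κ / 2 := by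
    have h1κ : (0:ℝ) < 1 - κ := by linarith
    have hL : 0 < Real.log (1 / (1 - κ)) := by
      apply Real.log_pos
      rw [lt_div_iff₀ h1κ]; linarith
    have h2 := (div_le_iff₀ hL).mp hN
    rw [one_div, Real.log_inv] at h2
    have heq : Real.log (2 / (ε * κ)) = -Real.log (ε * κ / 2) := by
      rw [← Real.log_inv, inv_div]
    rw [heq] at h2
    have h3 : Real.log ((1 - κ) ^ N) ≤ Real.log (ε * κ / 2) := by
      rw [Real.log_pow]
      nlinarith [h2]
    have hεκ : (0:ℝ) < ε * κ / 2 := by positivity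
    have hp : (0:ℝ) < (1 - κ) ^ N := pow_pos h1κ N
    exact (Real.log_le_log_iff hp hεκ).mp h3
  have hCfin : C ≤ ε / 2 := by
    have : (1 - κ) ^ (N + 1) ≤ (1 - κ) ^ N := by
      apply pow_le_pow_of_le_one (by linarith) (by linarith)
      omega
    rw [hC, div_le_iff₀ hκ0]
    calc (1 - κ) ^ (N + 1) ≤ (1 - κ) ^ N := this
      _ ≤ ε * κ / 2 := hpowN
      _ = ε / 2 * κ := by ring
  -- put it together
  rw [htrunc, hent]
  rw [← Complex.ofReal_sub, Complex.norm_real, Real.norm_eq_abs]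
  have hdiff : (∑ i, lam i * T i) - -∑ i, lam i * Real.log (lam i) = -∑ i, e i := by
    simp only [he]
    rw [sub_neg_eq_add, ← Finset.sum_neg_distrib, ← Finset.sum_add_distrib]
    exact Finset.sum_congr rfl fun i _ => by ring
  rw [hdiff, abs_neg, abs_of_nonneg (Finset.sum_nonneg (fun i _ => he_nonneg i))]
  exact le_trans hsumC hCfin
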